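/- Let (A, μ, f) and (B, ν, g) be linking triples. If (A, μ, f) and the orthogonal sum (A × B, μ ⊕ ν, f ⊕ g) are both metabolic, then (B, ν, g) is metabolic. -/

import Mathlib

/-- A linking form on a (finite) abelian group `G`: a `ℚ/ℤ`-valued pairing that is
additive in each variable, symmetric, and nondegenerate. -/
def IsLinkingForm {G : Type*} [AddCommGroup G] (l : G → G → AddCircle (1 : ℚ)) : Prop :=
  (∀ x y z : G, l (x + y) z = l x z + l y z) ∧
  (∀ x y z : G, l x (y + z) = l x y + l x z) ∧
  (∀ x y : G, l x y = l y x) ∧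
  (∀ x : G, x ≠ 0 → ∃ y : G, l x y ≠ 0)

/-- A linking triple `(G, l, f)` is metabolic if there is a subgroup `G₁` with
`|G₁|² = |G|` on which both `l` and `f` vanish. -/
def IsMetabolic {G : Type*} [AddCommGroup G]
    (l : G → G → AddCircle (1 : ℚ)) (f : G → ℚ) : Prop :=
  ∃ G₁ : AddSubgroup G, Nat.card G₁ ^ 2 = Nat.card G ∧
    (∀ x ∈ G₁, ∀ y ∈ G₁, l x y = 0) ∧ (∀ x ∈ G₁, f x = 0)

/-- A linking triple `(G, l, f)` is hyperbolic if `G = G₁ ⊕ G₂` with `G₁ ≅ G₂`,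
`l` vanishing on each of `G₁`, `G₂`, and `f` vanishing on `G₁ ∪ G₂`. -/
def IsHyperbolic {G : Type*} [AddCommGroup G]
    (l : G → G → AddCircle (1 : ℚ)) (f : G → ℚ) : Prop :=
  ∃ G₁ G₂ : AddSubgroup G,
    G₁ ⊓ G₂ = ⊥ ∧ G₁ ⊔ G₂ = ⊤ ∧ Nonempty (G₁ ≃+ G₂) ∧
    (∀ x ∈ G₁, ∀ y ∈ G₁, l x y = 0) ∧
    (∀ x ∈ G₂, ∀ y ∈ G₂, l x y = 0) ∧
    (∀ x ∈ G₁, f x = 0) ∧ (∀ x ∈ G₂, f x = 0)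


section LinkingAux

open Function

local notation "C" => AddCircle (1 : ℚ)


noncomputable def zmodChar (n : ℕ) : ZMod n →+ C :=
  ZMod.lift n ⟨zmultiplesHom C (((n : ℚ)⁻¹ : ℚ) : C), by
    rcases Nat.eq_zero_or_pos n with h | h
    · simp [h]
    · have : ((n : ℤ) • ((n : ℚ)⁻¹) : ℚ) = 1 := by
        have hn0 : (n : ℚ) ≠ 0 := by positivity
        rw [zsmul_eq_mul]; push_cast; field_simp
      simp only [zmultiplesHom_apply, ← AddCircle.coe_zsmul, this]
      exact AddCircle.coe_period 1⟩

lemma zmodChar_intCast (n : ℕ) (k : ℤ) :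
    zmodChar n ((k : ZMod n)) = (((k : ℚ) / n : ℚ) : C) := by
  rw [zmodChar, ZMod.lift_coe]
  simp only [zmultiplesHom_apply, ← AddCircle.coe_zsmul]
  norm_num [div_eq_mul_inv]

lemma zmodChar_inj {n : ℕ} (hn : 0 < n) {x : ZMod n} (h : zmodChar n x = 0) : x = 0 := by
  obtain ⟨k, rfl⟩ := ZMod.intCast_surjective x
  rw [zmodChar_intCast, AddCircle.coe_eq_zero_iff] at h
  obtain ⟨m, hm⟩ := h
  rw [ZMod.intCast_zmod_eq_zero_iff_dvd]
  refine ⟨m, ?_⟩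
  have hn' : (n : ℚ) ≠ 0 := by positivity
  have : (k : ℚ) = n * m := by
    field_simp at hm
    rw [zsmul_eq_mul, mul_one] at hm
    linarith [hm]
  exact_mod_cast this

-- helper: homs out of ZMod n are determined by value at 1
lemma zmod_hom_ext {n : ℕ} {M : Type*} [AddCommGroup M] (φ ψ : ZMod n →+ M)
    (h : φ 1 = ψ 1) : φ = ψ := by
  ext x
  obtain ⟨k, rfl⟩ := ZMod.intCast_surjective x
  have : ((k : ZMod n)) = k • (1 : ZMod n) := by simp
  rw [this, map_zsmul, map_zsmul, h]

noncomputable def zmodDual (n : ℕ) : ZMod n → (ZMod n →+ C) :=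
  fun a => (zmodChar n).comp (AddMonoidHom.mulLeft a)

lemma zmodDual_bij {n : ℕ} (hn : 0 < n) : Bijective (zmodDual n) := by
  constructor
  · intro a b hab
    have h1 : zmodDual n a 1 = zmodDual n b 1 := by rw [hab]
    simp only [zmodDual, AddMonoidHom.coe_comp, AddMonoidHom.coe_mulLeft, comp_apply,
      mul_one] at h1
    have := zmodChar_inj hn (x := a - b) (by rw [map_sub, h1, sub_self])
    exact sub_eq_zero.mp this
  · intro φ
    have hx : n • φ 1 = 0 := by
      rw [← map_nsmul]
      have : n • (1 : ZMod n) = 0 := by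
        simp [nsmul_eq_mul]
      rw [this, map_zero]
    obtain ⟨q, hq⟩ := QuotientAddGroup.mk_surjective (φ 1)
    rw [← hq, ← AddCircle.coe_nsmul, AddCircle.coe_eq_zero_iff] at hx
    obtain ⟨m, hm⟩ := hx
    refine ⟨(m : ZMod n), ?_⟩
    apply zmod_hom_ext
    simp only [zmodDual, AddMonoidHom.coe_comp, AddMonoidHom.coe_mulLeft, comp_apply, mul_one]
    rw [zmodChar_intCast, ← hq]
    have hn' : (n : ℚ) ≠ 0 := by positivity
    have h1 : (m : ℚ) = n * q := by
      have h2 := hm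
      simp only [zsmul_eq_mul, nsmul_eq_mul, mul_one] at h2
      exact h2
    have h3 : (m : ℚ) / n = q := by rw [h1]; field_simp
    rw [h3]

-- general duality card
lemma card_zmodDual (n : ℕ) (hn : 0 < n) : Nat.card (ZMod n →+ C) = n := by
  rw [← Nat.card_congr (Equiv.ofBijective _ (zmodDual_bij hn)), Nat.card_zmod]

lemma card_dual (G : Type*) [AddCommGroup G] [Finite G] :
    Nat.card (G →+ C) = Nat.card G := by
  obtain ⟨ι, inst, n, hn, ⟨e⟩⟩ := AddCommGroup.equiv_directSum_zmod_of_finite' G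
  classical
  let e2 : G ≃+ ∀ i, ZMod (n i) := e.trans (DirectSum.addEquivProd _)
  let e3 : (G →+ C) ≃+ ((∀ i, ZMod (n i)) →+ C) :=
    AddEquiv.addMonoidHomCongrLeft e2
  let e4 := Pi.addMonoidHomAddEquiv (fun i => ZMod (n i)) C
  rw [Nat.card_congr (e3.trans e4).toEquiv, Nat.card_pi, Nat.card_congr e2.toEquiv,
    Nat.card_pi]
  exact Finset.prod_congr rfl fun i _ => by
    rw [card_zmodDual _ (by have := hn i; omega), Nat.card_zmod]

section Annih
variable {G : Type*} [AddCommGroup G] {l : G → G → C}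

lemma LFzero_left (hl : IsLinkingForm l) (y : G) : l 0 y = 0 := by
  have h := hl.1 0 0 y
  rw [add_zero] at h
  exact (left_eq_add.mp h)

lemma LFzero_right (hl : IsLinkingForm l) (x : G) : l x 0 = 0 := by
  have h := hl.2.1 x 0 0
  rw [add_zero] at h
  exact (left_eq_add.mp h)

lemma LFneg_left (hl : IsLinkingForm l) (x y : G) : l (-x) y = - l x y := by
  have h := hl.1 x (-x) y
  rw [add_neg_cancel, LFzero_left hl] at h
  exact eq_neg_of_add_eq_zero_right h.symm

/-- annihilator of a subgroup w.r.t. a linking form -/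
def annih (l : G → G → C) (hl : IsLinkingForm l) (H : AddSubgroup G) : AddSubgroup G where
  carrier := {x | ∀ y ∈ H, l x y = 0}
  zero_mem' := fun y _ => LFzero_left hl y
  add_mem' := by
    intro a b ha hb y hy
    rw [hl.1 a b y, ha y hy, hb y hy, add_zero]
  neg_mem' := by
    intro a ha y hy
    rw [LFneg_left hl, ha y hy, neg_zero]

lemma mem_annih {hl : IsLinkingForm l} {H : AddSubgroup G} {x : G} :
    x ∈ annih l hl H ↔ ∀ y ∈ H, l x y = 0 := Iff.rfl

variable [Finite G]

lemma card_mul_card_annih (hl : IsLinkingForm l) (H : AddSubgroup G) :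
    Nat.card H * Nat.card (annih l hl H) = Nat.card G := by
  -- the map G →+ (H →+ C)
  let Φ : G →+ (H →+ C) :=
    { toFun := fun x =>
        { toFun := fun y => l x y.1
          map_zero' := LFzero_right hl x
          map_add' := fun a b => hl.2.1 x a.1 b.1 }
      map_zero' := by ext y; exact LFzero_left hl y.1
      map_add' := by intro a b; ext y; exact hl.1 a b y.1 }
  have hC : Finite (G →+ C) := by
    have := card_dual G
    have hpos : 0 < Nat.card G := Nat.card_pos
    exact (Nat.card_pos_iff.mp (by omega)).2
  -- adjoint map is bijective
  let ad : G →+ (G →+ C) :=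
    { toFun := fun x =>
        { toFun := fun y => l x y
          map_zero' := LFzero_right hl x
          map_add' := fun a b => hl.2.1 x a b }
      map_zero' := by ext y; exact LFzero_left hl y
      map_add' := by intro a b; ext y; exact hl.1 a b y }
  have had : Bijective ad := by
    rw [Nat.bijective_iff_injective_and_card]
    constructor
    · rw [injective_iff_map_eq_zero]
      intro x hx
      by_contra hx0
      obtain ⟨y, hy⟩ := hl.2.2.2 x hx0
      exact hy (DFunLike.congr_fun hx y)
    · exact (card_dual G).symm
  have hsurj : Surjective Φ := by
    intro χ
    obtain ⟨c, hc⟩ := CharacterModule.dual_surjective_of_injective (R := ℤ)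
      H.subtype.toIntLinearMap Subtype.val_injective χ
    obtain ⟨x, hx⟩ := had.2 c
    refine ⟨x, ?_⟩
    ext y
    have : χ y = c y.1 := by rw [← hc]; rfl
    rw [this, ← hx]
    rfl
  have hker : Φ.ker = annih l hl H := by
    ext x
    simp only [AddMonoidHom.mem_ker, mem_annih, DFunLike.ext_iff]
    constructor
    · intro h y hy; exact h ⟨y, hy⟩
    · intro h y; exact h y.1 y.2
  have h1 : Nat.card G = Nat.card (G ⧸ Φ.ker) * Nat.card Φ.ker :=
    AddSubgroup.card_eq_card_quotient_mul_card_addSubgroup _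
  have h2 : Nat.card (G ⧸ Φ.ker) = Nat.card (H →+ C) :=
    Nat.card_congr (QuotientAddGroup.quotientKerEquivOfSurjective Φ hsurj).toEquiv
  rw [h1, h2, hker, card_dual]


set_option linter.unusedSectionVars false

lemma AddSubgroup.eq_of_le_of_card_le' {H K : AddSubgroup G} (h : H ≤ K)
    (hc : Nat.card K ≤ Nat.card H) : H = K := by
  apply SetLike.coe_injective
  apply Set.eq_of_subset_of_ncard_le h
  rwa [← Nat.card_coe_set_eq, ← Nat.card_coe_set_eq]

lemma annih_of_metabolizer (hl : IsLinkingForm l) {H : AddSubgroup G}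
    (hH : ∀ x ∈ H, ∀ y ∈ H, l x y = 0) (hcard : Nat.card H ^ 2 = Nat.card G) :
    annih l hl H = H := by
  have hle : H ≤ annih l hl H := fun x hx => mem_annih.mpr (fun y hy => hH x hx y hy)
  have h1 := card_mul_card_annih hl H
  have hpos : 0 < Nat.card H := Nat.card_pos
  have h2 : Nat.card (annih l hl H) ≤ Nat.card H := by nlinarith [sq_nonneg (Nat.card H)]
  exact (AddSubgroup.eq_of_le_of_card_le' hle h2).symm

lemma double_annih (hl : IsLinkingForm l) (H : AddSubgroup G) :
    annih l hl (annih l hl H) = H := by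
  have hle : H ≤ annih l hl (annih l hl H) := by
    intro x hx
    rw [mem_annih]
    intro y hy
    rw [hl.2.2.1]
    exact mem_annih.mp hy x hx
  have h1 := card_mul_card_annih hl H
  have h2 := card_mul_card_annih hl (annih l hl H)
  have hpos : 0 < Nat.card (annih l hl H) := Nat.card_pos
  have h3 : Nat.card (annih l hl (annih l hl H)) ≤ Nat.card H := by nlinarith
  exact (AddSubgroup.eq_of_le_of_card_le' hle h3).symm

lemma annih_sup (hl : IsLinkingForm l) (H K : AddSubgroup G) :
    annih l hl (H ⊔ K) = annih l hl H ⊓ annih l hl K := by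
  ext x
  simp only [AddSubgroup.mem_inf, mem_annih]
  constructor
  · intro h
    exact ⟨fun y hy => h y (AddSubgroup.mem_sup_left hy),
           fun y hy => h y (AddSubgroup.mem_sup_right hy)⟩
  · rintro ⟨h1, h2⟩ y hy
    obtain ⟨u, hu, v, hv, rfl⟩ := AddSubgroup.mem_sup.mp hy
    rw [hl.2.1, h1 u hu, h2 v hv, add_zero]

end Annih

end LinkingAux

section Main

open Function

local notation "C" => AddCircle (1 : ℚ)

/-- If `(A, μ, f)` and `(A × B, μ ⊕ ν, f ⊕ g)` are both metabolic, then
`(B, ν, g)` is metabolic. -/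
theorem stmt2 {A B : Type*} [AddCommGroup A] [Finite A] [AddCommGroup B] [Finite B]
    (μ : A → A → AddCircle (1 : ℚ)) (f : A → ℚ)
    (ν : B → B → AddCircle (1 : ℚ)) (g : B → ℚ)
    (hμ : IsLinkingForm μ) (hν : IsLinkingForm ν)
    (hA : IsMetabolic μ f)
    (hAB : IsMetabolic (fun x y : A × B => μ x.1 y.1 + ν x.2 y.2)
      (fun x : A × B => f x.1 + g x.2)) :
    IsMetabolic ν g := by
  obtain ⟨M, hMcard, hMl, hMf⟩ := hA
  obtain ⟨N, hNcard, hNl, hNf⟩ := hAB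
  set lam : A × B → A × B → C := fun x y => μ x.1 y.1 + ν x.2 y.2 with hlam
  have hlf : IsLinkingForm lam := by
    refine ⟨?_, ?_, ?_, ?_⟩
    · intro x y z
      show μ (x.1 + y.1) z.1 + ν (x.2 + y.2) z.2 = _
      simp only [hlam]
      rw [hμ.1, hν.1]; abel
    · intro x y z
      show μ x.1 (y.1 + z.1) + ν x.2 (y.2 + z.2) = _
      simp only [hlam]
      rw [hμ.2.1, hν.2.1]; abel
    · intro x y
      show μ x.1 y.1 + ν x.2 y.2 = μ y.1 x.1 + ν y.2 x.2
      rw [hμ.2.2.1, hν.2.2.1]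
    · rintro ⟨a, b⟩ hx
      by_cases ha : a = 0
      · have hb : b ≠ 0 := by
          intro hb; exact hx (by rw [ha, hb]; rfl)
        obtain ⟨y, hy⟩ := hν.2.2.2 b hb
        exact ⟨(0, y), by simpa [lam, LFzero_right hμ] using hy⟩
      · obtain ⟨y, hy⟩ := hμ.2.2.2 a ha
        exact ⟨(y, 0), by simpa [lam, LFzero_right hν] using hy⟩
  -- the candidate metabolizer
  set L : AddSubgroup B :=
    { carrier := {b | ∃ m ∈ M, (m, b) ∈ N}
      zero_mem' := ⟨0, M.zero_mem, N.zero_mem⟩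
      add_mem' := by
        rintro a b ⟨m, hm, hmn⟩ ⟨m', hm', hmn'⟩
        exact ⟨m + m', M.add_mem hm hm', by simpa using N.add_mem hmn hmn'⟩
      neg_mem' := by
        rintro a ⟨m, hm, hmn⟩
        exact ⟨-m, M.neg_mem hm, by simpa using N.neg_mem hmn⟩ } with hLdef
  have hmemL : ∀ b : B, b ∈ L ↔ ∃ m ∈ M, (m, b) ∈ N := fun b => Iff.rfl
  refine ⟨L, ?_, ?_, ?_⟩
  · -- cardinality
    -- P = N ⊔ M × ⊥
    set P : AddSubgroup (A × B) := N ⊔ M.prod ⊥ with hP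
    have hmemP : ∀ b : B, ((0 : A), b) ∈ P ↔ b ∈ L := by
      intro b
      constructor
      · intro h
        obtain ⟨u, hu, v, hv, huv⟩ := AddSubgroup.mem_sup.mp h
        obtain ⟨hv1, hv2⟩ := AddSubgroup.mem_prod.mp hv
        have h2 : u.2 = b := by
          have := congrArg Prod.snd huv
          simpa [AddSubgroup.mem_bot.mp hv2] using this
        refine ⟨u.1, ?_, by rw [← h2]; exact hu⟩
        have h1 : u.1 + v.1 = 0 := congrArg Prod.fst huv
        have : u.1 = -v.1 := eq_neg_of_add_eq_zero_left h1
        rw [this]; exact M.neg_mem hv1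
      · rintro ⟨m, hm, hmn⟩
        refine AddSubgroup.mem_sup.mpr ⟨(m, b), hmn, (-m, 0), ?_, by ext <;> simp⟩
        exact AddSubgroup.mem_prod.mpr ⟨M.neg_mem hm, AddSubgroup.mem_bot.mpr rfl⟩
    -- annihilators
    have hannN : annih lam hlf N = N := annih_of_metabolizer hlf hNl hNcard
    have hannM : annih μ hμ M = M := annih_of_metabolizer hμ hMl hMcard
    have hannMb : annih lam hlf (M.prod ⊥) = M.prod ⊤ := by
      ext ⟨a, b⟩
      simp only [mem_annih, AddSubgroup.mem_prod, AddSubgroup.mem_top, and_true]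
      constructor
      · intro h
        rw [← hannM, mem_annih]
        intro m hm
        have := h (m, 0) (AddSubgroup.mem_prod.mpr ⟨hm, AddSubgroup.mem_bot.mpr rfl⟩)
        simpa [lam, LFzero_right hν] using this
      · intro ha y hy
        obtain ⟨hy1, hy2⟩ := AddSubgroup.mem_prod.mp hy
        have hy2' : y.2 = 0 := AddSubgroup.mem_bot.mp hy2
        have hμ0 : μ a y.1 = 0 := by
          rw [← hannM, mem_annih] at ha
          exact ha y.1 hy1
        show μ a y.1 + ν b y.2 = 0
        rw [hμ0, hy2', LFzero_right hν, add_zero]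
    have hannP : annih lam hlf P = N ⊓ M.prod ⊤ := by
      rw [hP, annih_sup hlf, hannN, hannMb]
    -- L equals its own annihilator
    have hLann : annih ν hν L = L := by
      ext b
      rw [mem_annih, ← hmemP b, ← double_annih hlf P, hannP, mem_annih]
      constructor
      · intro h y hy
        obtain ⟨hyN, hyM⟩ := AddSubgroup.mem_inf.mp hy
        have hy1 : y.1 ∈ M := (AddSubgroup.mem_prod.mp hyM).1
        have hyL : y.2 ∈ L := ⟨y.1, hy1, hyN⟩
        show μ 0 y.1 + ν b y.2 = 0
        rw [LFzero_left hμ, zero_add]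
        exact h y.2 hyL
      · intro h b' hb'
        obtain ⟨m, hm, hmn⟩ := hb'
        have := h (m, b') (AddSubgroup.mem_inf.mpr ⟨hmn,
          AddSubgroup.mem_prod.mpr ⟨hm, AddSubgroup.mem_top _⟩⟩)
        simpa [lam, LFzero_left hμ] using this
    have hkey := card_mul_card_annih hν L
    rw [hLann] at hkey
    rw [sq]; exact hkey
  · -- ν vanishes on L
    rintro b ⟨m, hm, hmn⟩ b' ⟨m', hm', hmn'⟩
    have h1 : μ m m' + ν b b' = 0 := hNl (m, b) hmn (m', b') hmn'
    rw [hMl m hm m' hm', zero_add] at h1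
    exact h1
  · -- g vanishes on L
    rintro b ⟨m, hm, hmn⟩
    have h1 : f m + g b = 0 := hNf (m, b) hmn
    have h2 := hMf m hm
    linarith

end Main
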